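/- A ring R is right Central McCoy if and only if the ring D₂(R) = {[[a, b],[0, a]] : a, b ∈ R} of 2×2 upper triangular matrices with constant diagonal is right Central McCoy. -/

import Mathlib

def IsRightCentralMcCoy (R : Type*) [Ring R] : Prop :=
  ∀ f g : Polynomial R, f ≠ 0 → g ≠ 0 → f * g = 0 →
    ∃ r : R, r ≠ 0 ∧ ∀ i : ℕ, f.coeff i * r ∈ Set.center R

/-- The subring `D₂(R)` of `2 × 2` upper triangular matrices with constant
main diagonal, i.e. matrices `[[a, b], [0, a]]`. -/
def D2 (R : Type*) [Ring R] : Subring (Matrix (Fin 2) (Fin 2) R) where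
  carrier := {M | M 1 0 = 0 ∧ M 0 0 = M 1 1}
  zero_mem' := ⟨rfl, rfl⟩
  one_mem' := ⟨rfl, rfl⟩
  add_mem' := by
    rintro a b ⟨ha1, ha2⟩ ⟨hb1, hb2⟩
    constructor <;> simp [Matrix.add_apply, ha1, hb1, ha2, hb2]
  neg_mem' := by
    rintro a ⟨ha1, ha2⟩
    constructor <;> simp [Matrix.neg_apply, ha1, ha2]
  mul_mem' := by
    rintro a b ⟨ha1, ha2⟩ ⟨hb1, hb2⟩
    constructor <;> simp [Matrix.mul_apply, Fin.sum_univ_two, ha1, hb1, ha2, hb2]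

namespace D2Aux

variable {R : Type*} [Ring R]

lemma lower (M : D2 R) : (M : Matrix (Fin 2) (Fin 2) R) 1 0 = 0 := M.2.1
lemma diag (M : D2 R) : (M : Matrix (Fin 2) (Fin 2) R) 0 0 = (M : Matrix (Fin 2) (Fin 2) R) 1 1 := M.2.2

/-- the diagonal-entry ring hom -/
def dd : D2 R →+* R where
  toFun M := (M : Matrix (Fin 2) (Fin 2) R) 0 0
  map_one' := by simp
  map_mul' M N := by
    show ((M : Matrix (Fin 2) (Fin 2) R) * (N : Matrix (Fin 2) (Fin 2) R)) 0 0 = _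
    rw [Matrix.mul_apply, Fin.sum_univ_two, lower N, mul_zero, add_zero]
  map_zero' := rfl
  map_add' M N := rfl

/-- the upper-entry additive hom -/
def uu : D2 R →+ R where
  toFun M := (M : Matrix (Fin 2) (Fin 2) R) 0 1
  map_zero' := rfl
  map_add' M N := rfl

lemma uu_mul (M N : D2 R) : uu (M * N) = dd M * uu N + uu M * dd N := by
  show ((M : Matrix (Fin 2) (Fin 2) R) * (N : Matrix (Fin 2) (Fin 2) R)) 0 1 = _
  rw [Matrix.mul_apply, Fin.sum_univ_two, ← diag N]
  rfl

lemma eq_zero_iff (M : D2 R) : M = 0 ↔ dd M = 0 ∧ uu M = 0 := by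
  constructor
  · rintro rfl; exact ⟨rfl, rfl⟩
  · rintro ⟨h0, h1⟩
    apply Subtype.ext
    ext i j
    fin_cases i <;> fin_cases j
    · exact h0
    · exact h1
    · exact lower M
    · exact (diag M).symm.trans h0

/-- scalar embedding -/
def sc : R →+* D2 R where
  toFun a := ⟨Matrix.diagonal (fun _ => a), by
    constructor
    · simp [Matrix.diagonal]
    · simp [Matrix.diagonal]⟩
  map_one' := by apply Subtype.ext; simp [Matrix.diagonal_one]
  map_mul' a b := by apply Subtype.ext; simp
  map_zero' := by apply Subtype.ext; simp
  map_add' a b := by apply Subtype.ext; simp [Matrix.diagonal_add]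

@[simp] lemma dd_sc (a : R) : dd (sc a) = a := by
  show Matrix.diagonal (fun _ : Fin 2 => a) 0 0 = a; simp
@[simp] lemma uu_sc (a : R) : uu (sc a) = 0 := by
  show Matrix.diagonal (fun _ : Fin 2 => a) 0 1 = 0; simp

/-- the nilpotent element r·E₀₁ -/
def eup (r : R) : D2 R := ⟨Matrix.of ![![0, r], ![0, 0]], ⟨rfl, rfl⟩⟩

@[simp] lemma dd_eup (r : R) : dd (eup r) = 0 := rfl
@[simp] lemma uu_eup (r : R) : uu (eup r) = r := rfl

lemma mem_center_of (M : D2 R) (h0 : dd M ∈ Set.center R) (h1 : uu M ∈ Set.center R) :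
    M ∈ Set.center (D2 R) := by
  rw [Semigroup.mem_center_iff] at h0 h1 ⊢
  intro N
  apply Subtype.ext
  ext i j
  have e00 : dd (N * M) = dd (M * N) := by rw [map_mul, map_mul, h0]
  have e01 : uu (N * M) = uu (M * N) := by
    rw [uu_mul, uu_mul, h1, h0, add_comm]
  fin_cases i <;> fin_cases j
  · exact e00
  · exact e01
  · exact (lower (N * M)).trans (lower (M * N)).symm
  · exact (diag (N * M)).symm.trans (e00.trans (diag (M * N)))

lemma center_entries {M : D2 R} (h : M ∈ Set.center (D2 R)) :
    dd M ∈ Set.center R ∧ uu M ∈ Set.center R := by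
  rw [Semigroup.mem_center_iff] at h
  constructor <;> rw [Semigroup.mem_center_iff] <;> intro c
  · have := congrArg dd (h (sc c))
    simpa using this
  · have := congrArg uu (h (sc c))
    rw [uu_mul, uu_mul] at this
    simpa using this

/-- the polynomial of upper entries -/
noncomputable def upoly (F : Polynomial (D2 R)) : Polynomial R :=
  ⟨AddMonoidAlgebra.ofCoeff (F.toFinsupp.coeff.mapRange uu (map_zero uu))⟩

@[simp] lemma upoly_coeff (F : Polynomial (D2 R)) (n : ℕ) :
    (upoly F).coeff n = uu (F.coeff n) := by
  rcases F with ⟨F⟩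
  rfl

end D2Aux

open D2Aux in
theorem isRightCentralMcCoy_iff_D2 (R : Type*) [Ring R] :
    IsRightCentralMcCoy R ↔ IsRightCentralMcCoy (D2 R) := by
  constructor
  · -- R McCoy → D2 McCoy
    intro hR F G hF hG hFG
    -- the conclusion in the generic case, given a suitable r
    have key : ∀ r : R, r ≠ 0 → (∀ i : ℕ, dd (F.coeff i) * r ∈ Set.center R) →
        ∃ M : D2 R, M ≠ 0 ∧ ∀ i : ℕ, F.coeff i * M ∈ Set.center (D2 R) := by
      intro r hr hc
      refine ⟨eup r, ?_, fun i => ?_⟩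
      · intro h
        rw [eq_zero_iff] at h
        exact hr (by simpa using h.2)
      · apply mem_center_of
        · rw [map_mul, dd_eup, mul_zero]
          exact Set.zero_mem_center
        · rw [uu_mul, dd_eup, uu_eup, mul_zero, add_zero]
          exact hc i
    by_cases hf : F.map (dd (R := R)) = 0
    · -- f = 0 : F * eup 1 = 0
      have hd : ∀ i : ℕ, dd (F.coeff i) = 0 := by
        intro i
        have := congrArg (fun p => Polynomial.coeff p i) hf
        simpa [Polynomial.coeff_map] using this
      have hone : (1 : R) ≠ 0 := by
        intro h1
        apply hF
        apply Polynomial.ext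
        intro i
        rw [Polynomial.coeff_zero, eq_zero_iff]
        refine ⟨hd i, ?_⟩
        calc uu (F.coeff i) = uu (F.coeff i) * 1 := (mul_one _).symm
          _ = 0 := by rw [h1, mul_zero]
      refine ⟨eup 1, ?_, fun i => ?_⟩
      · intro h; rw [eq_zero_iff] at h; exact hone (by simpa using h.2)
      · have : F.coeff i * eup 1 = 0 := by
          rw [eq_zero_iff, map_mul, uu_mul, dd_eup, uu_eup, mul_zero, mul_one, mul_zero,
            add_zero, hd i]
          exact ⟨rfl, rfl⟩
        rw [this]
        exact Set.zero_mem_center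
    · by_cases hg : G.map (dd (R := R)) = 0
      · -- g = 0 : use f * upoly G = 0
        have hdg : ∀ j : ℕ, dd (G.coeff j) = 0 := by
          intro j
          have := congrArg (fun p => Polynomial.coeff p j) hg
          simpa [Polynomial.coeff_map] using this
        have hg1 : upoly G ≠ 0 := by
          intro h
          apply hG
          apply Polynomial.ext
          intro j
          rw [Polynomial.coeff_zero, eq_zero_iff]
          refine ⟨hdg j, ?_⟩
          have := congrArg (fun p => Polynomial.coeff p j) h
          simpa using this
        have hmul : F.map (dd (R := R)) * upoly G = 0 := by
          ext n
          rw [Polynomial.coeff_mul, Polynomial.coeff_zero]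
          have h0 : uu ((F * G).coeff n) = 0 := by rw [hFG]; simp
          rw [Polynomial.coeff_mul] at h0
          rw [map_sum uu] at h0
          rw [← h0]
          apply Finset.sum_congr rfl
          intro p _
          rw [uu_mul, hdg p.2, mul_zero, add_zero, Polynomial.coeff_map, upoly_coeff]
        obtain ⟨r, hr, hc⟩ := hR _ _ hf hg1 hmul
        exact key r hr (fun i => by
          have := hc i
          rwa [Polynomial.coeff_map] at this)
      · -- f ≠ 0, g ≠ 0
        have hmul : F.map (dd (R := R)) * G.map (dd (R := R)) = 0 := by
          rw [← Polynomial.map_mul, hFG, Polynomial.map_zero]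
        obtain ⟨r, hr, hc⟩ := hR _ _ hf hg hmul
        exact key r hr (fun i => by
          have := hc i
          rwa [Polynomial.coeff_map] at this)
  · -- D2 McCoy → R McCoy
    intro hD f g hf hg hfg
    have hscinj : Function.Injective (sc (R := R)) := by
      intro a b h
      have := congrArg dd h
      simpa using this
    have hF : f.map (sc (R := R)) ≠ 0 := by
      intro h
      exact hf (Polynomial.map_injective _ hscinj (by simpa using h))
    have hG : g.map (sc (R := R)) ≠ 0 := by
      intro h
      exact hg (Polynomial.map_injective _ hscinj (by simpa using h))
    have hFG : f.map (sc (R := R)) * g.map (sc (R := R)) = 0 := by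
      rw [← Polynomial.map_mul, hfg, Polynomial.map_zero]
    obtain ⟨M, hM, hc⟩ := hD _ _ hF hG hFG
    have hent : ∀ i : ℕ, f.coeff i * dd M ∈ Set.center R ∧ f.coeff i * uu M ∈ Set.center R := by
      intro i
      have h := hc i
      rw [Polynomial.coeff_map] at h
      have h1 := center_entries h
      constructor
      · have := h1.1
        rwa [map_mul, dd_sc] at this
      · have := h1.2
        rwa [uu_mul, dd_sc, uu_sc, zero_mul, add_zero] at this
    have hM' : ¬(dd M = 0 ∧ uu M = 0) := fun h => hM ((eq_zero_iff M).mpr h)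
    by_cases hd : dd M = 0
    · exact ⟨uu M, fun h2 => hM' ⟨hd, h2⟩, fun i => (hent i).2⟩
    · exact ⟨dd M, hd, fun i => (hent i).1⟩
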